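/- Let X₀ and X₁ be independent random variables, each uniformly distributed on [−2, 2], and set Ω₀ = arccos(X₀/2), Ω₁ = arccos(X₁/2). Then for every real x with 0 < x < 1, P(Ω₀/Ω₁ ≤ x) = 1/2 + (1 + cos(πx)) / (4·(x² − 1)). -/

import Mathlib

open MeasureTheory ProbabilityTheory

/-- CDF of the ratio `Ω₀ / Ω₁` of arccosines of independent uniforms on `[-2,2]`,
for arguments in `(0,1)`. -/
lemma aux1 {x : ℝ} (hx₀ : 0 < x) (hx₁ : x < 1) :
    ∫ s in (0:ℝ)..Real.pi, Real.sin s * (2 - 2 * Real.cos (x * s))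
      = 4 - 2 * (1 + Real.cos (Real.pi * x)) / (1 - x ^ 2) := by
  have h1 : (1 + x) ≠ 0 := by nlinarith
  have h2 : (1 - x) ≠ 0 := by nlinarith
  have key : ∀ s : ℝ, HasDerivAt (fun s => -2 * Real.cos s
      + Real.cos ((1+x)*s)/(1+x) + Real.cos ((1-x)*s)/(1-x))
      (Real.sin s * (2 - 2 * Real.cos (x*s))) s := by
    intro s
    have d1 : HasDerivAt (fun s : ℝ => -2 * Real.cos s) ((-2) * (-Real.sin s)) s :=
      (Real.hasDerivAt_cos s).const_mul (-2)
    have g2 : HasDerivAt (fun s : ℝ => (1+x)*s) ((1+x)*1) s :=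
      (hasDerivAt_id s).const_mul (1+x)
    have g3 : HasDerivAt (fun s : ℝ => (1-x)*s) ((1-x)*1) s :=
      (hasDerivAt_id s).const_mul (1-x)
    have d2 : HasDerivAt (fun s : ℝ => Real.cos ((1+x)*s)/(1+x))
        ((-Real.sin ((1+x)*s) * ((1+x)*1))/(1+x)) s := g2.cos.div_const _
    have d3 : HasDerivAt (fun s : ℝ => Real.cos ((1-x)*s)/(1-x))
        ((-Real.sin ((1-x)*s) * ((1-x)*1))/(1-x)) s := g3.cos.div_const _
    have := (d1.add d2).add d3
    refine this.congr_deriv ?_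
    have hsum : Real.sin ((1+x)*s) = Real.sin s * Real.cos (x*s) + Real.cos s * Real.sin (x*s) := by
      rw [show (1+x)*s = s + x*s by ring, Real.sin_add]
    have hdiff : Real.sin ((1-x)*s) = Real.sin s * Real.cos (x*s) - Real.cos s * Real.sin (x*s) := by
      rw [show (1-x)*s = s - x*s by ring, Real.sin_sub]
    rw [hsum, hdiff]
    field_simp
    ring
  rw [intervalIntegral.integral_eq_sub_of_hasDerivAt (fun s _ => key s)
    ((Continuous.mul Real.continuous_sin (by continuity)).intervalIntegrable 0 Real.pi)]
  have e1 : Real.cos ((1+x)*Real.pi) = -Real.cos (Real.pi * x) := by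
    rw [show (1+x)*Real.pi = Real.pi + Real.pi * x by ring, Real.cos_add]
    simp
  have e2 : Real.cos ((1-x)*Real.pi) = -Real.cos (Real.pi * x) := by
    rw [show (1-x)*Real.pi = Real.pi - Real.pi * x by ring, Real.cos_pi_sub]
  have h3 : 1 - x ^ 2 ≠ 0 := by nlinarith
  simp only [e1, e2, mul_zero, Real.cos_zero, Real.cos_pi]
  field_simp [h3]
  ring

lemma aux2 {x : ℝ} (hx₀ : 0 < x) (hx₁ : x < 1) :
    ∫ b in (-2:ℝ)..2, (2 - 2 * Real.cos (x * Real.arccos (b/2)))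
      = 8 - 4 * (1 + Real.cos (Real.pi * x)) / (1 - x ^ 2) := by
  have hg : ∀ s ∈ Set.uIcc Real.pi 0, HasDerivAt (fun s : ℝ => 2 * Real.cos s)
      (2 * (-Real.sin s)) s := fun s _ => (Real.hasDerivAt_cos s).const_mul 2
  have hf : Continuous (fun b : ℝ => 2 - 2 * Real.cos (x * Real.arccos (b/2))) := by
    apply continuous_const.sub
    exact (continuous_const.mul ((Real.continuous_cos).comp
      (continuous_const.mul (Real.continuous_arccos.comp (continuous_id.div_const 2)))))
  have hsub := intervalIntegral.integral_comp_smul_deriv hg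
    ((continuous_const.mul Real.continuous_sin.neg).continuousOn) hf
  rw [Real.cos_pi, Real.cos_zero] at hsub
  norm_num at hsub
  rw [← hsub]
  have hcong : ∀ s ∈ Set.uIcc Real.pi 0,
      (fun s => 2 * Real.sin s * (2 - 2 * Real.cos (x * Real.arccos (Real.cos s)))) s
      = (fun s => 2 * (Real.sin s * (2 - 2 * Real.cos (x * s)))) s := by
    intro s hs
    rw [Set.uIcc_of_ge Real.pi_nonneg] at hs
    simp only [Real.arccos_cos hs.1 hs.2]
    ring
  rw [intervalIntegral.integral_congr hcong, intervalIntegral.integral_symm,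
    intervalIntegral.integral_const_mul, aux1 hx₀ hx₁]
  have h3 : 1 - x ^ 2 ≠ 0 := by nlinarith
  field_simp
  ring

lemma inner_measure {t : ℝ} (ht0 : 0 ≤ t) (htπ : t ≤ Real.pi) :
    ((4 : ENNReal)⁻¹ • volume.restrict (Set.Icc (-2 : ℝ) 2)) {a : ℝ | Real.arccos (a/2) ≤ t}
      = ENNReal.ofReal ((2 - 2 * Real.cos t)/4) := by
  have hms : MeasurableSet {a : ℝ | Real.arccos (a/2) ≤ t} :=
    measurableSet_le ((Real.continuous_arccos.comp (continuous_id.div_const 2)).measurable)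
      measurable_const
  rw [Measure.smul_apply, Measure.restrict_apply hms]
  have hset : {a : ℝ | Real.arccos (a/2) ≤ t} ∩ Set.Icc (-2) 2 = Set.Icc (2 * Real.cos t) 2 := by
    ext a
    simp only [Set.mem_inter_iff, Set.mem_setOf_eq, Set.mem_Icc]
    constructor
    · rintro ⟨h1, h2, h3⟩
      refine ⟨?_, h3⟩
      have hc : Real.cos t ≤ Real.cos (Real.arccos (a/2)) :=
        Real.cos_le_cos_of_nonneg_of_le_pi (Real.arccos_nonneg _) htπ h1
      rw [Real.cos_arccos (by linarith) (by linarith)] at hc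
      linarith
    · rintro ⟨h1, h2⟩
      have hcb : -(2:ℝ) ≤ 2 * Real.cos t := by nlinarith [Real.neg_one_le_cos t]
      refine ⟨?_, by linarith, h2⟩
      by_contra h
      push_neg at h
      have h4 := Real.strictAntiOn_cos ⟨ht0, htπ⟩
        ⟨Real.arccos_nonneg _, Real.arccos_le_pi _⟩ h
      rw [Real.cos_arccos (by linarith) (by linarith)] at h4
      linarith
  rw [hset, Real.volume_Icc, smul_eq_mul]
  rw [show ((4:ENNReal))⁻¹ = ENNReal.ofReal (1/4) by
    rw [show (1/4 : ℝ) = 4⁻¹ by norm_num, ENNReal.ofReal_inv_of_pos (by norm_num : (0:ℝ) < 4)]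
    norm_num]
  rw [← ENNReal.ofReal_mul (by norm_num : (0:ℝ) ≤ 1/4)]
  congr 1
  ring

theorem cdf_ratio_lt_one
    {Ω : Type*} [MeasureSpace Ω] [IsProbabilityMeasure (ℙ : Measure Ω)]
    (X₀ X₁ : Ω → ℝ) (hX₀ : Measurable X₀) (hX₁ : Measurable X₁)
    (hindep : IndepFun X₀ X₁ ℙ)
    (hU₀ : Measure.map X₀ ℙ = (4 : ENNReal)⁻¹ • volume.restrict (Set.Icc (-2 : ℝ) 2))
    (hU₁ : Measure.map X₁ ℙ = (4 : ENNReal)⁻¹ • volume.restrict (Set.Icc (-2 : ℝ) 2))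
    (x : ℝ) (hx₀ : 0 < x) (hx₁ : x < 1) :
    ℙ {ω | Real.arccos (X₀ ω / 2) / Real.arccos (X₁ ω / 2) ≤ x}
      = ENNReal.ofReal (1 / 2 + (1 + Real.cos (Real.pi * x)) / (4 * (x ^ 2 - 1))) := by
  set μ : Measure ℝ := (4 : ENNReal)⁻¹ • volume.restrict (Set.Icc (-2 : ℝ) 2) with hμ
  haveI : IsFiniteMeasure μ := by
    constructor
    rw [hμ, Measure.smul_apply, Measure.restrict_apply MeasurableSet.univ, Set.univ_inter,
      Real.volume_Icc, smul_eq_mul]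
    exact ENNReal.mul_lt_top (by norm_num) ENNReal.ofReal_lt_top
  have hmap : Measure.map (fun ω => (X₀ ω, X₁ ω)) ℙ = μ.prod μ := by
    rw [(indepFun_iff_map_prod_eq_prod_map_map hX₀.aemeasurable
      hX₁.aemeasurable).mp hindep, hU₀, hU₁]
  have m1 : Measurable (fun p : ℝ × ℝ => Real.arccos (p.1/2)) :=
    (Real.continuous_arccos.comp (continuous_fst.div_const 2)).measurable
  have m2 : Measurable (fun p : ℝ × ℝ => Real.arccos (p.2/2)) :=
    (Real.continuous_arccos.comp (continuous_snd.div_const 2)).measurable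
  have hS : MeasurableSet {p : ℝ × ℝ | Real.arccos (p.1/2) / Real.arccos (p.2/2) ≤ x} :=
    measurableSet_le (m1.div m2) measurable_const
  have hS' : MeasurableSet {p : ℝ × ℝ | Real.arccos (p.1/2) ≤ x * Real.arccos (p.2/2)} :=
    measurableSet_le m1 (measurable_const.mul m2)
  have hpre : ℙ {ω | Real.arccos (X₀ ω / 2) / Real.arccos (X₁ ω / 2) ≤ x}
      = (μ.prod μ) {p : ℝ × ℝ | Real.arccos (p.1/2) / Real.arccos (p.2/2) ≤ x} := by
    rw [← hmap, Measure.map_apply (hX₀.prodMk hX₁) hS]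
    rfl
  have hnull : (μ.prod μ) {p : ℝ × ℝ | ¬ p.2 < 2} = 0 := by
    have he : {p : ℝ × ℝ | ¬ p.2 < 2} = Set.univ ×ˢ Set.Ici (2:ℝ) := by
      ext p; simp [not_lt]
    rw [he, Measure.prod_prod]
    have h0 : volume (Set.Ici (2:ℝ) ∩ Set.Icc (-2) 2) = 0 := by
      refine le_antisymm ?_ (zero_le)
      calc volume (Set.Ici (2:ℝ) ∩ Set.Icc (-2) 2) ≤ volume (Set.Icc (2:ℝ) 2) :=
            measure_mono (fun a ha => ⟨ha.1, ha.2.2⟩)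
        _ = 0 := by simp [Real.volume_Icc]
    have h1 : μ (Set.Ici (2:ℝ)) = 0 := by
      rw [hμ, Measure.smul_apply, Measure.restrict_apply measurableSet_Ici, h0, smul_eq_mul,
        mul_zero]
    rw [h1, mul_zero]
  have hae : {p : ℝ × ℝ | Real.arccos (p.1/2) / Real.arccos (p.2/2) ≤ x}
      =ᵐ[μ.prod μ] {p : ℝ × ℝ | Real.arccos (p.1/2) ≤ x * Real.arccos (p.2/2)} := by
    have h2 : ∀ᵐ p ∂(μ.prod μ), p.2 < (2:ℝ) := by
      rw [MeasureTheory.ae_iff]; exact hnull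
    filter_upwards [h2] with p hp
    have hpos : 0 < Real.arccos (p.2/2) := Real.arccos_pos.2 (by linarith)
    simp only [Set.mem_setOf_eq, eq_iff_iff]
    exact div_le_iff₀ hpos
  rw [hpre, measure_congr hae, Measure.prod_apply_symm hS']
  have hinner : ∀ b ∈ Set.Icc (-2:ℝ) 2,
      μ ((fun a => (a, b)) ⁻¹' {p : ℝ × ℝ | Real.arccos (p.1/2) ≤ x * Real.arccos (p.2/2)})
        = ENNReal.ofReal ((2 - 2 * Real.cos (x * Real.arccos (b/2)))/4) := by
    intro b hb
    have h0 : 0 ≤ x * Real.arccos (b/2) := mul_nonneg hx₀.le (Real.arccos_nonneg _)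
    have hπ : x * Real.arccos (b/2) ≤ Real.pi := by
      nlinarith [Real.arccos_le_pi (b/2), Real.arccos_nonneg (b/2), Real.pi_pos]
    have he : ((fun a => (a, b)) ⁻¹' {p : ℝ × ℝ | Real.arccos (p.1/2) ≤ x * Real.arccos (p.2/2)})
        = {a : ℝ | Real.arccos (a/2) ≤ x * Real.arccos (b/2)} := rfl
    rw [he, hμ]
    exact inner_measure h0 hπ
  rw [hμ, lintegral_smul_measure]
  rw [setLIntegral_congr_fun measurableSet_Icc hinner]
  have hcont : Continuous (fun b : ℝ => (2 - 2 * Real.cos (x * Real.arccos (b/2)))/4) := by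
    apply Continuous.div_const
    exact continuous_const.sub (continuous_const.mul (Real.continuous_cos.comp
      (continuous_const.mul (Real.continuous_arccos.comp (continuous_id.div_const 2)))))
  have hint : IntegrableOn (fun b : ℝ => (2 - 2 * Real.cos (x * Real.arccos (b/2)))/4)
      (Set.Icc (-2) 2) volume := hcont.integrableOn_Icc
  have hnn : 0 ≤ᵐ[volume.restrict (Set.Icc (-2:ℝ) 2)]
      (fun b : ℝ => (2 - 2 * Real.cos (x * Real.arccos (b/2)))/4) :=
    Filter.Eventually.of_forall fun b => by
      simp only [Pi.zero_apply]
      nlinarith [Real.cos_le_one (x * Real.arccos (b/2))]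
  rw [← MeasureTheory.ofReal_integral_eq_lintegral_ofReal hint hnn]
  rw [MeasureTheory.integral_Icc_eq_integral_Ioc,
    ← intervalIntegral.integral_of_le (by norm_num : (-2:ℝ) ≤ 2),
    intervalIntegral.integral_div, aux2 hx₀ hx₁]
  rw [show ((4:ENNReal))⁻¹ = ENNReal.ofReal (1/4) by
    rw [show (1/4 : ℝ) = 4⁻¹ by norm_num, ENNReal.ofReal_inv_of_pos (by norm_num : (0:ℝ) < 4)]
    norm_num]
  rw [smul_eq_mul, ← ENNReal.ofReal_mul (by norm_num : (0:ℝ) ≤ 1/4)]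
  congr 1
  have h3 : x ^ 2 - 1 ≠ 0 := by nlinarith
  have h4 : 1 - x ^ 2 ≠ 0 := by nlinarith
  field_simp
  ring
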